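/- If α ∈ (0,1/2) then every irrational β ∈ [0,1] is of intermediate α-type; moreover, if the continued fraction entries of β are bounded, then β is of intermediate α-type for every α ∈ (0,1). -/

import Mathlib

/-- The Farey map. -/
noncomputable def T1 (x : ℝ) : ℝ := if x ≤ 1/2 then x / (1 - x) else (1 - x) / x

/-- Left inverse branch of the Farey map. -/
noncomputable def g0 (x : ℝ) : ℝ := x / (1 + x)

/-- Right inverse branch of the Farey map. -/
noncomputable def g1 (x : ℝ) : ℝ := 1 / (1 + x)

open scoped Classical in
/-- `F β n = f_{1,ω₁(β)|ₙ}`, the composition of the Farey inverse branches along the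
coding of `β` (where `ω_{1,k}(β) = 1` iff `T₁^{k-1}(β) > 1/2`). -/
noncomputable def F (β : ℝ) : ℕ → ℝ → ℝ
  | 0 => id
  | n + 1 => F β n ∘ (if 1/2 < T1^[n] β then g1 else g0)

/-- Shifted continued fraction numerators: `P a 0 = p₋₁ = 1`, `P a (k+1) = p_k`,
with `p_k = a_k p_{k-1} + p_{k-2}`. -/
def P (a : ℕ → ℕ) : ℕ → ℕ
  | 0 => 1
  | 1 => 0
  | n + 2 => a (n + 1) * P a (n + 1) + P a n

/-- Shifted continued fraction denominators: `Q a 0 = q₋₁ = 0`, `Q a (k+1) = q_k`,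
with `q_k = a_k q_{k-1} + q_{k-2}`. -/
def Q (a : ℕ → ℕ) : ℕ → ℕ
  | 0 => 0
  | 1 => 1
  | n + 2 => a (n + 1) * Q a (n + 1) + Q a n

open scoped Classical in
/-- `m(n)`: the number of indices `ℓ ≤ n` with `T₁^{ℓ-1}(β) > 1/2`. -/
noncomputable def mfun (β : ℝ) (n : ℕ) : ℕ :=
  ((Finset.Icc 1 n).filter (fun ℓ => 1/2 < T1^[ℓ - 1] β)).card

open scoped Classical in
/-- `k(n) = max {ℓ ≤ n : T₁^{ℓ-1}(β) > 1/2}` (with value `0` if no such index exists). -/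
noncomputable def kfun (β : ℝ) (n : ℕ) : ℕ :=
  ((Finset.Icc 1 n).filter (fun ℓ => 1/2 < T1^[ℓ - 1] β)).sup id

/-- The Gauss map. -/
noncomputable def gauss (x : ℝ) : ℝ := 1/x - ⌊1/x⌋

/-- `β` has infinite continued fraction expansion `[0; a 1, a 2, …]`. -/
def HasCF (β : ℝ) (a : ℕ → ℕ) : Prop :=
  ∀ k : ℕ, gauss^[k] β ∈ Set.Ioo (0:ℝ) 1 ∧ (a (k + 1) : ℝ) = ⌊1 / gauss^[k] β⌋

/-- `β = [0; a₁, a₂, …]` is of intermediate `α`-type: for some `ε > 0` the series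
`Σ_{n ≥ 1} Σ_{j=1}^{aₙ} t_{n,j}^{-2(1-α)+ε}` converges, where `t_{n,j} = j q_{n-1} + q_{n-2}`
is the denominator of the intermediate approximant `[0; a₁, …, a_{n-1}, j]`. -/
def IntermediateType (α : ℝ) (a : ℕ → ℕ) : Prop :=
  ∃ ε > (0:ℝ), Summable (fun p : (n : ℕ) × Fin (a (n + 1)) =>
    (((p.2 : ℕ) + 1) * Q a (p.1 + 1) + Q a p.1 : ℝ) ^ (-(2 * (1 - α)) + ε))

lemma cf_one_le {β : ℝ} {a : ℕ → ℕ} (ha : HasCF β a) (k : ℕ) : 1 ≤ a (k + 1) := by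
  obtain ⟨⟨h0, h1⟩, h2⟩ := ha k
  have hx : (1:ℝ) ≤ 1 / gauss^[k] β := by
    rw [le_div_iff₀ h0]; linarith
  have hf : (1:ℝ) ≤ (⌊1 / gauss^[k] β⌋ : ℝ) := by
    exact_mod_cast Int.le_floor.2 (by exact_mod_cast hx)
  have : (1:ℝ) ≤ (a (k+1) : ℝ) := by rw [h2]; exact hf
  exact_mod_cast this

lemma Q_one_le {a : ℕ → ℕ} (h1 : ∀ k, 1 ≤ a (k + 1)) : ∀ n, 1 ≤ Q a (n + 1) := by
  intro n
  induction n with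
  | zero => simp [Q]
  | succ n ih =>
    show 1 ≤ a (n+1) * Q a (n+1) + Q a n
    calc 1 = 1 * 1 := by ring
    _ ≤ a (n+1) * Q a (n+1) := Nat.mul_le_mul (h1 n) ih
    _ ≤ _ := Nat.le_add_right _ _

lemma Q_two_pow {a : ℕ → ℕ} (h1 : ∀ k, 1 ≤ a (k + 1)) :
    ∀ m, 2 ^ m ≤ Q a (2 * m + 1) ∧ 2 ^ m ≤ Q a (2 * m + 2) := by
  intro m
  induction m with
  | zero =>
    refine ⟨by simp [Q], ?_⟩
    show 1 ≤ a 1 * Q a 1 + Q a 0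
    simpa [Q] using h1 0
  | succ m ih =>
    obtain ⟨ha1, ha2⟩ := ih
    have e3 : Q a (2 * (m+1) + 1) = a (2*m+2) * Q a (2*m+2) + Q a (2*m+1) := by
      show Q a (2*m+1+2) = _
      rfl
    have h3 : 2 ^ (m+1) ≤ Q a (2 * (m+1) + 1) := by
      rw [e3]
      calc 2 ^ (m+1) = 1 * 2^m + 2^m := by ring
      _ ≤ a (2*m+2) * Q a (2*m+2) + Q a (2*m+1) :=
        Nat.add_le_add (Nat.mul_le_mul (h1 _) ha2) ha1
    refine ⟨h3, ?_⟩
    have e4 : Q a (2 * (m+1) + 2) = a (2*m+3) * Q a (2*m+3) + Q a (2*m+2) := by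
      show Q a (2*m+2+2) = _
      rfl
    rw [e4]
    calc 2 ^ (m+1) = 1 * 2^(m+1) + 0 := by ring
    _ ≤ a (2*m+3) * Q a (2*m+3) + Q a (2*m+2) := by
        refine Nat.add_le_add (Nat.mul_le_mul (h1 _) ?_) (Nat.zero_le _)
        have := h3
        rwa [show 2*(m+1)+1 = 2*m+3 by ring] at this
    
lemma Q_ge_pow {a : ℕ → ℕ} (h1 : ∀ k, 1 ≤ a (k + 1)) (n : ℕ) :
    2 ^ (n / 2) ≤ Q a (n + 1) := by
  rcases Nat.even_or_odd n with ⟨m, hm⟩ | ⟨m, hm⟩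
  · subst hm
    rw [show (m + m)/2 = m by omega, show m+m+1 = 2*m+1 by ring]
    exact (Q_two_pow h1 m).1
  · subst hm
    rw [show (2*m+1)/2 = m by omega, show 2*m+1+1 = 2*m+2 by ring]
    exact (Q_two_pow h1 m).2

lemma summable_Q_rpow {a : ℕ → ℕ} (h1 : ∀ k, 1 ≤ a (k + 1)) {s : ℝ} (hs : 0 < s) :
    Summable (fun n : ℕ => (Q a (n + 1) : ℝ) ^ (-s)) := by
  set ρ : ℝ := (2:ℝ) ^ (-s/2) with hρ
  have hρ0 : 0 < ρ := Real.rpow_pos_of_pos two_pos _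
  have hρ1 : ρ < 1 := Real.rpow_lt_one_of_one_lt_of_neg one_lt_two (by linarith)
  refine Summable.of_nonneg_of_le (fun n => Real.rpow_nonneg (by positivity) _)
    (fun n => ?_) (((summable_geometric_of_lt_one hρ0.le hρ1).mul_left ρ⁻¹))
  have hQ : ((2:ℝ) ^ (n/2 : ℕ)) ≤ (Q a (n+1) : ℝ) := by
    exact_mod_cast Q_ge_pow h1 n
  have h2pos : (0:ℝ) < 2 ^ (n/2 : ℕ) := by positivity
  have step1 : (Q a (n+1):ℝ) ^ (-s) ≤ ((2:ℝ) ^ (n/2:ℕ)) ^ (-s) :=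
    Real.rpow_le_rpow_of_nonpos h2pos hQ (by linarith)
  have step2 : ((2:ℝ) ^ (n/2:ℕ)) ^ (-s) = ρ ^ (2*(n/2)) := by
    rw [← Real.rpow_natCast (2:ℝ) (n/2), ← Real.rpow_mul (by norm_num),
      hρ, ← Real.rpow_natCast ((2:ℝ) ^ (-s/2)) (2*(n/2)), ← Real.rpow_mul (by norm_num)]
    congr 1
    push_cast
    ring
  have step3 : ρ ^ (2*(n/2)) ≤ ρ ^ (n - 1) :=
    pow_le_pow_of_le_one hρ0.le hρ1.le (by omega)
  have step4 : ρ ^ (n - 1) ≤ ρ⁻¹ * ρ ^ n := by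
    have h5 : ρ ^ ((n-1)+1) ≤ ρ ^ n :=
      pow_le_pow_of_le_one hρ0.le hρ1.le (by omega)
    have : ρ ^ (n-1) = ρ⁻¹ * ρ ^ ((n-1)+1) := by
      rw [pow_succ]
      field_simp
    rw [this]
    exact mul_le_mul_of_nonneg_left h5 (inv_nonneg.2 hρ0.le)
  calc (Q a (n+1):ℝ) ^ (-s) ≤ ρ ^ (2*(n/2)) := step2 ▸ step1
  _ ≤ ρ ^ (n-1) := step3
  _ ≤ ρ⁻¹ * ρ ^ n := step4

lemma summable_sigma_key {a : ℕ → ℕ} (h1 : ∀ k, 1 ≤ a (k + 1)) {s C : ℝ} (hs : 0 < s)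
    (hC : ∀ n, ∑ j : Fin (a (n+1)),
        (((j : ℕ) + 1) * Q a (n + 1) + Q a n : ℝ) ^ (-s) ≤ C * (Q a (n+1) : ℝ) ^ (-s)) :
    Summable (fun p : (n : ℕ) × Fin (a (n + 1)) =>
      (((p.2 : ℕ) + 1) * Q a (p.1 + 1) + Q a p.1 : ℝ) ^ (-s)) := by
  have hnn : ∀ p : (n : ℕ) × Fin (a (n + 1)),
      0 ≤ (((p.2 : ℕ) + 1) * Q a (p.1 + 1) + Q a p.1 : ℝ) ^ (-s) :=
    fun p => Real.rpow_nonneg (by positivity) _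
  rw [summable_sigma_of_nonneg hnn]
  constructor
  · intro n
    exact Summable.of_finite
  · refine Summable.of_nonneg_of_le (fun n => tsum_nonneg fun j => hnn _) (fun n => ?_)
      (((summable_Q_rpow h1 hs).mul_left C))
    rw [tsum_fintype]
    exact hC n

lemma intermediate_of_bound {a : ℕ → ℕ} (h1 : ∀ k, 1 ≤ a (k + 1)) {α ε : ℝ}
    (hε : 0 < ε) {C : ℝ}
    (hC : ∀ n, ∑ j : Fin (a (n+1)),
        (((j : ℕ) + 1) * Q a (n + 1) + Q a n : ℝ) ^ (-(2 * (1 - α)) + ε)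
        ≤ C * (Q a (n+1) : ℝ) ^ (-(2 * (1 - α)) + ε))
    (hs : 0 < 2 * (1 - α) - ε) : IntermediateType α a := by
  refine ⟨ε, hε, ?_⟩
  have he : -(2 * (1 - α)) + ε = -(2 * (1 - α) - ε) := by ring
  rw [he] at hC ⊢
  exact summable_sigma_key h1 hs hC
theorem stmt_10 (β : ℝ) (hβ : β ∈ Set.Icc (0:ℝ) 1) (hirr : Irrational β)
    (a : ℕ → ℕ) (ha : HasCF β a) :
    (∀ α ∈ Set.Ioo (0:ℝ) (1/2), IntermediateType α a) ∧
    ((∃ B : ℕ, ∀ n : ℕ, 1 ≤ n → a n ≤ B) → ∀ α ∈ Set.Ioo (0:ℝ) 1, IntermediateType α a) := by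
  have h1 : ∀ k, 1 ≤ a (k + 1) := cf_one_le ha
  have hQ1 : ∀ n, (1:ℝ) ≤ (Q a (n+1) : ℝ) := fun n => by exact_mod_cast Q_one_le h1 n
  constructor
  · intro α hα
    obtain ⟨hα0, hα2⟩ := hα
    set ε : ℝ := (2 * (1 - α) - 1) / 2 with hε
    have hε0 : 0 < ε := by rw [hε]; linarith
    set s : ℝ := 2 * (1 - α) - ε with hsdef
    have hs1 : 1 < s := by rw [hsdef, hε]; linarith
    have hs0 : 0 < s := by linarith
    have hg : Summable (fun j : ℕ => ((j : ℝ) + 1) ^ (-s)) := by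
      have h := (Real.summable_nat_rpow.2 (show -s < -1 by linarith)).comp_injective
        Nat.succ_injective
      refine h.congr fun j => ?_
      simp [Function.comp, Nat.succ_eq_add_one]
    set C : ℝ := ∑' j : ℕ, ((j : ℝ) + 1) ^ (-s) with hCdef
    have hexp : -(2 * (1 - α)) + ε = -s := by rw [hsdef]; ring
    refine intermediate_of_bound h1 hε0 (C := C) ?_ (by rw [← hsdef]; exact hs0)
    intro n
    rw [hexp]
    have hq0 : (0:ℝ) < (Q a (n+1) : ℝ) := lt_of_lt_of_le one_pos (hQ1 n)
    have hqnn : (0:ℝ) ≤ (Q a (n+1) : ℝ) ^ (-s) := Real.rpow_nonneg hq0.le _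
    calc ∑ j : Fin (a (n+1)), (((j : ℕ) + 1) * Q a (n + 1) + Q a n : ℝ) ^ (-s)
        ≤ ∑ j : Fin (a (n+1)), ((j : ℝ) + 1) ^ (-s) * (Q a (n+1) : ℝ) ^ (-s) := by
          refine Finset.sum_le_sum fun j _ => ?_
          have hjq : (0:ℝ) < ((j : ℕ) + 1 : ℝ) * (Q a (n+1) : ℝ) := by positivity
          have hle : ((j : ℕ) + 1 : ℝ) * (Q a (n+1) : ℝ)
              ≤ (((j : ℕ) + 1) * Q a (n + 1) + Q a n : ℝ) := by
            push_cast
            have : (0:ℝ) ≤ (Q a n : ℝ) := Nat.cast_nonneg _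
            linarith
          have := Real.rpow_le_rpow_of_nonpos hjq hle (neg_nonpos.2 hs0.le)
          calc (((j : ℕ) + 1) * Q a (n + 1) + Q a n : ℝ) ^ (-s)
              ≤ (((j : ℕ) + 1 : ℝ) * (Q a (n+1) : ℝ)) ^ (-s) := by
                convert this using 2
          _ = ((j : ℝ) + 1) ^ (-s) * (Q a (n+1) : ℝ) ^ (-s) :=
                Real.mul_rpow (by positivity) hq0.le
      _ = (∑ j : Fin (a (n+1)), ((j : ℝ) + 1) ^ (-s)) * (Q a (n+1) : ℝ) ^ (-s) := by
          rw [← Finset.sum_mul]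
      _ ≤ C * (Q a (n+1) : ℝ) ^ (-s) := by
          refine mul_le_mul_of_nonneg_right ?_ hqnn
          rw [Fin.sum_univ_eq_sum_range (fun j => ((j : ℝ) + 1) ^ (-s))]
          exact Summable.sum_le_tsum _ (fun j _ => Real.rpow_nonneg (by positivity) _) hg
  · rintro ⟨B, hB⟩ α hα
    obtain ⟨hα0, hα1⟩ := hα
    set ε : ℝ := 1 - α with hε
    have hε0 : 0 < ε := by rw [hε]; linarith
    have hs : 2 * (1 - α) - ε = 1 - α := by rw [hε]; ring
    have hs0 : 0 < 2 * (1 - α) - ε := by rw [hs]; linarith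
    set s : ℝ := 2 * (1 - α) - ε with hsdef
    have hexp : -(2 * (1 - α)) + ε = -s := by rw [hsdef]; ring
    refine intermediate_of_bound h1 hε0 (C := (B : ℝ)) ?_ hs0
    intro n
    rw [hexp]
    have hq0 : (0:ℝ) < (Q a (n+1) : ℝ) := lt_of_lt_of_le one_pos (hQ1 n)
    have hqnn : (0:ℝ) ≤ (Q a (n+1) : ℝ) ^ (-s) := Real.rpow_nonneg hq0.le _
    calc ∑ j : Fin (a (n+1)), (((j : ℕ) + 1) * Q a (n + 1) + Q a n : ℝ) ^ (-s)
        ≤ ∑ _j : Fin (a (n+1)), (Q a (n+1) : ℝ) ^ (-s) := by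
          refine Finset.sum_le_sum fun j _ => ?_
          refine Real.rpow_le_rpow_of_nonpos hq0 ?_ (neg_nonpos.2 hs0.le)
          push_cast
          have h0 : (0:ℝ) ≤ (Q a n : ℝ) := Nat.cast_nonneg _
          have h2 : (1:ℝ) ≤ ((j:ℕ) : ℝ) + 1 := by
            have : (0:ℝ) ≤ ((j:ℕ):ℝ) := Nat.cast_nonneg _
            linarith
          nlinarith [hq0]
      _ = (a (n+1) : ℝ) * (Q a (n+1) : ℝ) ^ (-s) := by
          rw [Finset.sum_const, Finset.card_univ, Fintype.card_fin, nsmul_eq_mul]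
      _ ≤ (B : ℝ) * (Q a (n+1) : ℝ) ^ (-s) := by
          refine mul_le_mul_of_nonneg_right ?_ hqnn
          exact_mod_cast hB (n+1) (Nat.le_add_left 1 n)
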